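/- arXiv:2402.12499 — 4 statements merged into one kernel-verified Lean document; each statement's English description precedes it below -/
import Mathlib

section
/- Let (E, d) be a complete metric space and γ ∈ [0, 1). Let U : E → E be Lipschitz with constant γ and let J* ∈ E be a fixed point of U (U J* = J*). Let S : E → E be Lipschitz with constant γ and let J_S ∈ E be a fixed point of S (S J_S = J_S). Suppose there exist J ∈ E and an integer ℓ ≥ 1 such that, setting Ĵ = U^{ℓ−1} J (the (ℓ−1)-fold iterate of U applied to J), one has S Ĵ = U Ĵ. Then d(J_S, J*) ≤ (2 γ^ℓ / (1 − γ)) · d(J, J*). -/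
open Filter
open scoped NNReal

/-- Performance bound for rollout with lookahead (Thm. 3, eq. 15b), abstracted:
`U` is the optimal Bellman operator (a `γ`-contraction with fixed point `Jstar`),
`S` is the rollout-strategy operator (a `γ`-contraction with fixed point `JS`),
and `S` agrees with `U` on the `(ℓ-1)`-fold iterate of `U` applied to `J`. -/
theorem rollout_performance_bound {E : Type*} [MetricSpace E] [CompleteSpace E]
    (γ : ℝ≥0) (hγ : γ < 1)
    (U S : E → E) (hU : LipschitzWith γ U) (hS : LipschitzWith γ S)
    (Jstar : E) (hJstar : U Jstar = Jstar)
    (JS : E) (hJS : S JS = JS)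
    (J : E) (ℓ : ℕ) (hℓ : 1 ≤ ℓ)
    (hroll : S (U^[ℓ - 1] J) = U (U^[ℓ - 1] J)) :
    dist JS Jstar ≤ (2 * (γ : ℝ) ^ ℓ / (1 - (γ : ℝ))) * dist J Jstar := by
  set Jh := U^[ℓ - 1] J with hJh
  have hγR : (γ : ℝ) < 1 := hγ
  have hγ0 : (0 : ℝ) ≤ γ := γ.coe_nonneg
  have hfix : U^[ℓ - 1] Jstar = Jstar := Function.iterate_fixed hJstar (ℓ - 1)
  have hd1 : dist Jh Jstar ≤ (γ : ℝ) ^ (ℓ - 1) * dist J Jstar := by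
    have := (hU.iterate (ℓ - 1)).dist_le_mul J Jstar
    rw [hfix] at this
    simpa [hJh, NNReal.coe_pow] using this
  have hpow : (γ : ℝ) * (γ : ℝ) ^ (ℓ - 1) = (γ : ℝ) ^ ℓ := by
    rw [← pow_succ']
    congr 1
    omega
  have hd2 : dist (U Jh) Jstar ≤ (γ : ℝ) ^ ℓ * dist J Jstar := by
    calc dist (U Jh) Jstar = dist (U Jh) (U Jstar) := by rw [hJstar]
      _ ≤ (γ : ℝ) * dist Jh Jstar := hU.dist_le_mul _ _
      _ ≤ (γ : ℝ) * ((γ : ℝ) ^ (ℓ - 1) * dist J Jstar) := by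
          exact mul_le_mul_of_nonneg_left hd1 hγ0
      _ = (γ : ℝ) ^ ℓ * dist J Jstar := by rw [← mul_assoc, hpow]
  have hd3 : dist JS (U Jh) ≤ (γ : ℝ) * dist JS Jstar + (γ : ℝ) ^ ℓ * dist J Jstar := by
    calc dist JS (U Jh) = dist (S JS) (S Jh) := by rw [hJS, hroll]
      _ ≤ (γ : ℝ) * dist JS Jh := hS.dist_le_mul _ _
      _ ≤ (γ : ℝ) * (dist JS Jstar + dist Jstar Jh) :=
          mul_le_mul_of_nonneg_left (dist_triangle _ _ _) hγ0
      _ = (γ : ℝ) * dist JS Jstar + (γ : ℝ) * dist Jstar Jh := by ring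
      _ ≤ (γ : ℝ) * dist JS Jstar + (γ : ℝ) ^ ℓ * dist J Jstar := by
          have : (γ : ℝ) * dist Jstar Jh ≤ (γ : ℝ) ^ ℓ * dist J Jstar := by
            rw [dist_comm]
            calc (γ : ℝ) * dist Jh Jstar ≤ (γ : ℝ) * ((γ : ℝ) ^ (ℓ - 1) * dist J Jstar) :=
                  mul_le_mul_of_nonneg_left hd1 hγ0
              _ = (γ : ℝ) ^ ℓ * dist J Jstar := by rw [← mul_assoc, hpow]
          linarith
  have hmain : dist JS Jstar ≤ (γ : ℝ) * dist JS Jstar + 2 * (γ : ℝ) ^ ℓ * dist J Jstar := by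
    have := dist_triangle JS (U Jh) Jstar
    linarith
  have h1γ : (0 : ℝ) < 1 - (γ : ℝ) := by linarith
  rw [div_mul_eq_mul_div, le_div_iff₀ h1γ]
  nlinarith [dist_nonneg (x := JS) (y := Jstar)]
end

section
/- Let L be a nonempty finite type, let μ₁ : L → ℝ be a probability vector with μ₁(ℓ) > 0 for all ℓ, and let M > 0. For each t ∈ ℕ let K_t : L → [0, M] satisfy min_ℓ K_t(ℓ) = 0, and let Z_t : L → ℝ satisfy max_ℓ |Z_t(ℓ) − K_t(ℓ)| ≤ η_t where η_t → 0 as t → ∞. Define μ_t(ℓ) = μ₁(ℓ) exp(−t Z_t(ℓ)) / (∑_{ℓ'} μ₁(ℓ') exp(−t Z_t(ℓ'))). Then ∑_ℓ K_t(ℓ) μ_t(ℓ) → 0 as t → ∞. -/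
open Filter

/-- Analytic core of Thm. 4.A: if the Gibbs-form posterior `μ t` is built from
`Z t` which converges uniformly to the excess discrepancy `K t` (bounded in
`[0, M]`, with minimum `0`), then the posterior-expected excess discrepancy
vanishes. -/
theorem posterior_expected_discrepancy_tendsto_zero {L : Type*} [Fintype L] [Nonempty L]
    (μ₁ : L → ℝ) (hμ₁ : ∀ ℓ, 0 < μ₁ ℓ) (hsum : ∑ ℓ, μ₁ ℓ = 1)
    (M : ℝ) (hM : 0 < M)
    (K Z : ℕ → L → ℝ)
    (hK0 : ∀ t ℓ, 0 ≤ K t ℓ) (hKM : ∀ t ℓ, K t ℓ ≤ M)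
    (hKmin : ∀ t, ∃ ℓ, K t ℓ = 0)
    (η : ℕ → ℝ) (hZK : ∀ t ℓ, |Z t ℓ - K t ℓ| ≤ η t)
    (hη : Tendsto η atTop (nhds 0))
    (μ : ℕ → L → ℝ)
    (hμ : ∀ t ℓ, μ t ℓ =
      μ₁ ℓ * Real.exp (-(t : ℝ) * Z t ℓ) /
        ∑ ℓ', μ₁ ℓ' * Real.exp (-(t : ℝ) * Z t ℓ')) :
    Tendsto (fun t => ∑ ℓ, K t ℓ * μ t ℓ) atTop (nhds 0) := by
  classical
  obtain ⟨ℓm, -, hℓm⟩ := Finset.exists_min_image Finset.univ μ₁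
    ⟨Classical.arbitrary L, Finset.mem_univ _⟩
  set m := μ₁ ℓm with hm
  have hm0 : 0 < m := hμ₁ ℓm
  have hmle : ∀ ℓ, m ≤ μ₁ ℓ := fun ℓ => hℓm ℓ (Finset.mem_univ ℓ)
  have hμ₁le1 : ∀ ℓ, μ₁ ℓ ≤ 1 := by
    intro ℓ
    rw [← hsum]
    exact Finset.single_le_sum (fun i _ => (hμ₁ i).le) (Finset.mem_univ ℓ)
  have hD : ∀ t : ℕ, 0 < ∑ ℓ', μ₁ ℓ' * Real.exp (-(t : ℝ) * Z t ℓ') := fun t =>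
    Finset.sum_pos (fun ℓ _ => mul_pos (hμ₁ ℓ) (Real.exp_pos _)) Finset.univ_nonempty
  have hμpos : ∀ t ℓ, 0 < μ t ℓ := by
    intro t ℓ; rw [hμ]
    exact div_pos (mul_pos (hμ₁ ℓ) (Real.exp_pos _)) (hD t)
  have hμsum : ∀ t, ∑ ℓ, μ t ℓ = 1 := by
    intro t
    simp only [hμ]
    rw [← Finset.sum_div, div_self (hD t).ne']
  rw [Metric.tendsto_atTop]
  intro ε hε
  set ε' := ε / 2 with hε'
  have hε'0 : 0 < ε' := by positivity
  have h1 : ∀ᶠ t in atTop, η t < ε' / 4 :=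
    hη.eventually (gt_mem_nhds (show (0 : ℝ) < ε' / 4 by positivity))
  have hbot : Tendsto (fun t : ℕ => -((t : ℝ) * (ε' / 2))) atTop atBot :=
    tendsto_neg_atTop_atBot.comp
      (tendsto_natCast_atTop_atTop.atTop_mul_const (by positivity))
  have h2 : Tendsto (fun t : ℕ =>
      (Fintype.card L : ℝ) * (M / m) * Real.exp (-((t : ℝ) * (ε' / 2)))) atTop (nhds 0) := by
    have he : Tendsto (fun t : ℕ => Real.exp (-((t : ℝ) * (ε' / 2)))) atTop (nhds 0) :=
      Real.tendsto_exp_atBot.comp hbot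
    simpa using he.const_mul ((Fintype.card L : ℝ) * (M / m))
  have h3 : ∀ᶠ t : ℕ in atTop,
      (Fintype.card L : ℝ) * (M / m) * Real.exp (-((t : ℝ) * (ε' / 2))) < ε' :=
    h2.eventually (gt_mem_nhds hε'0)
  obtain ⟨N, hN⟩ := eventually_atTop.mp (h1.and h3)
  refine ⟨N, fun t ht => ?_⟩
  obtain ⟨hηt, htail⟩ := hN t ht
  have hsum_nonneg : 0 ≤ ∑ ℓ, K t ℓ * μ t ℓ :=
    Finset.sum_nonneg fun ℓ _ => mul_nonneg (hK0 t ℓ) (hμpos t ℓ).le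
  rw [Real.dist_eq, sub_zero, abs_of_nonneg hsum_nonneg]
  -- pointwise bound
  have key : ∀ ℓ, K t ℓ * μ t ℓ ≤ ε' * μ t ℓ + (M / m) * Real.exp (-((t : ℝ) * (ε' / 2))) := by
    intro ℓ
    by_cases hcase : K t ℓ ≤ ε'
    · have : K t ℓ * μ t ℓ ≤ ε' * μ t ℓ :=
        mul_le_mul_of_nonneg_right hcase (hμpos t ℓ).le
      have hpos : 0 ≤ (M / m) * Real.exp (-((t : ℝ) * (ε' / 2))) := by positivity
      linarith
    · push_neg at hcase
      obtain ⟨ℓ₀, hℓ₀⟩ := hKmin t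
      have hZ0 : Z t ℓ₀ ≤ η t := by
        have := hZK t ℓ₀
        rw [hℓ₀, sub_zero] at this
        exact (abs_le.mp this).2
      have hZℓ : K t ℓ - η t ≤ Z t ℓ := by
        have := (abs_le.mp (hZK t ℓ)).1
        linarith
      -- denominator lower bound
      have hDlb : m * Real.exp (-(t : ℝ) * η t) ≤
          ∑ ℓ', μ₁ ℓ' * Real.exp (-(t : ℝ) * Z t ℓ') := by
        have h0 : m * Real.exp (-(t : ℝ) * η t) ≤ μ₁ ℓ₀ * Real.exp (-(t : ℝ) * Z t ℓ₀) := by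
          apply mul_le_mul (hmle ℓ₀) _ (Real.exp_pos _).le (hμ₁ ℓ₀).le
          apply Real.exp_le_exp.mpr
          have ht0 : (0 : ℝ) ≤ (t : ℝ) := Nat.cast_nonneg t
          linarith [mul_le_mul_of_nonneg_left hZ0 ht0]
        calc m * Real.exp (-(t : ℝ) * η t) ≤ μ₁ ℓ₀ * Real.exp (-(t : ℝ) * Z t ℓ₀) := h0
          _ ≤ ∑ ℓ', μ₁ ℓ' * Real.exp (-(t : ℝ) * Z t ℓ') :=
            Finset.single_le_sum (f := fun ℓ' => μ₁ ℓ' * Real.exp (-(t : ℝ) * Z t ℓ'))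
              (fun i _ => mul_nonneg (hμ₁ i).le (Real.exp_pos _).le) (Finset.mem_univ ℓ₀)
      -- numerator upper bound
      have hnum : μ₁ ℓ * Real.exp (-(t : ℝ) * Z t ℓ) ≤ Real.exp (-(t : ℝ) * (K t ℓ - η t)) := by
        calc μ₁ ℓ * Real.exp (-(t : ℝ) * Z t ℓ) ≤ 1 * Real.exp (-(t : ℝ) * (K t ℓ - η t)) := by
              apply mul_le_mul (hμ₁le1 ℓ) _ (Real.exp_pos _).le one_pos.le
              apply Real.exp_le_exp.mpr
              have ht0 : (0 : ℝ) ≤ (t : ℝ) := Nat.cast_nonneg t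
              linarith [mul_le_mul_of_nonneg_left hZℓ ht0]
          _ = Real.exp (-(t : ℝ) * (K t ℓ - η t)) := one_mul _
      have hμub : μ t ℓ ≤ (1 / m) * Real.exp (-((t : ℝ) * (ε' / 2))) := by
        rw [hμ]
        have step : μ₁ ℓ * Real.exp (-(t : ℝ) * Z t ℓ) /
            (∑ ℓ', μ₁ ℓ' * Real.exp (-(t : ℝ) * Z t ℓ')) ≤
            Real.exp (-(t : ℝ) * (K t ℓ - η t)) / (m * Real.exp (-(t : ℝ) * η t)) :=
          div_le_div₀ (Real.exp_pos _).le hnum (by positivity) hDlb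
        refine step.trans ?_
        have heq : Real.exp (-(t : ℝ) * (K t ℓ - η t)) / (m * Real.exp (-(t : ℝ) * η t)) =
            (1 / m) * Real.exp (-(t : ℝ) * (K t ℓ - 2 * η t)) := by
          rw [show -(t : ℝ) * (K t ℓ - η t) =
              (-(t : ℝ) * (K t ℓ - 2 * η t)) + (-(t : ℝ) * η t) by ring, Real.exp_add]
          field_simp
        rw [heq]
        apply mul_le_mul_of_nonneg_left _ (by positivity : (0:ℝ) ≤ 1 / m)
        apply Real.exp_le_exp.mpr
        have ht0 : (0 : ℝ) ≤ (t : ℝ) := Nat.cast_nonneg t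
        have hkey : ε' / 2 ≤ K t ℓ - 2 * η t := by linarith
        linarith [mul_le_mul_of_nonneg_left hkey ht0]
      have hKμ : K t ℓ * μ t ℓ ≤ M * ((1 / m) * Real.exp (-((t : ℝ) * (ε' / 2)))) :=
        mul_le_mul (hKM t ℓ) hμub (hμpos t ℓ).le hM.le
      have hεμ : 0 ≤ ε' * μ t ℓ := mul_nonneg hε'0.le (hμpos t ℓ).le
      have hre : M * ((1 / m) * Real.exp (-((t : ℝ) * (ε' / 2)))) =
          (M / m) * Real.exp (-((t : ℝ) * (ε' / 2))) := by ring
      linarith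
  calc ∑ ℓ, K t ℓ * μ t ℓ
      ≤ ∑ ℓ, (ε' * μ t ℓ + (M / m) * Real.exp (-((t : ℝ) * (ε' / 2)))) :=
        Finset.sum_le_sum fun ℓ _ => key ℓ
    _ = ε' * (∑ ℓ, μ t ℓ) + (Fintype.card L : ℝ) * ((M / m) * Real.exp (-((t : ℝ) * (ε' / 2)))) := by
        rw [Finset.sum_add_distrib, ← Finset.mul_sum, Finset.sum_const, Finset.card_univ,
          nsmul_eq_mul]
    _ = ε' + (Fintype.card L : ℝ) * (M / m) * Real.exp (-((t : ℝ) * (ε' / 2))) := by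
        rw [hμsum t]; ring
    _ < ε' + ε' := by linarith
    _ = ε := by rw [hε']; ring
end

section
/- Let Θ be a compact metric space, let ρ be a Borel probability measure on Θ with full support (ρ(U) > 0 for every nonempty open U ⊆ Θ), and let K : Θ → ℝ be continuous with K(θ) ≥ 0 for all θ and inf_{θ∈Θ} K(θ) = 0. For t > 0 define the probability measure ρ_t on Θ by ρ_t(A) = ∫_A exp(−t K(θ)) dρ(θ) / ∫_Θ exp(−t K(θ)) dρ(θ). Then ∫_Θ K(θ) dρ_t(θ) → 0 as t → ∞. -/
open Filter MeasureTheory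

/-- Analytic core of Thm. 4.B: for a full-support prior `ρ` on a compact metric
space and a continuous nonnegative discrepancy `K` with infimum `0`, the
Gibbs-posterior expectation of `K` vanishes as `t → ∞`. -/
theorem gibbs_posterior_expectation_tendsto_zero {Θ : Type*} [MetricSpace Θ]
    [CompactSpace Θ] [MeasurableSpace Θ] [BorelSpace Θ]
    (ρ : Measure Θ) [IsProbabilityMeasure ρ]
    (hfull : ∀ U : Set Θ, IsOpen U → U.Nonempty → 0 < ρ U)
    (K : Θ → ℝ) (hKcont : Continuous K) (hK0 : ∀ θ, 0 ≤ K θ)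
    (hKinf : ⨅ θ, K θ = 0) :
    Tendsto (fun t : ℝ =>
        (∫ θ, K θ * Real.exp (-t * K θ) ∂ρ) / (∫ θ, Real.exp (-t * K θ) ∂ρ))
      atTop (nhds 0) := by
  have hne : Nonempty Θ := by
    by_contra h
    rw [not_nonempty_iff] at h
    have h1 : ρ Set.univ = 1 := measure_univ
    rw [Set.univ_eq_empty_iff.2 h, measure_empty] at h1
    exact zero_ne_one h1
  -- maximum of K
  obtain ⟨θM, -, hθM⟩ := isCompact_univ.exists_isMaxOn Set.univ_nonempty hKcont.continuousOn
  set M := K θM with hMdef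
  have hM0 : 0 ≤ M := hK0 θM
  have hMb : ∀ θ, K θ ≤ M := fun θ => hθM (Set.mem_univ θ)
  -- integrability
  have hint : ∀ t : ℝ, Integrable (fun θ => Real.exp (-t * K θ)) ρ := by
    intro t
    have : Continuous fun θ => Real.exp (-t * K θ) :=
      Real.continuous_exp.comp (continuous_const.mul hKcont)
    simpa [integrableOn_univ] using
      this.continuousOn.integrableOn_compact (isCompact_univ (X := Θ))
  have hintK : ∀ t : ℝ, Integrable (fun θ => K θ * Real.exp (-t * K θ)) ρ := by
    intro t
    have : Continuous fun θ => K θ * Real.exp (-t * K θ) :=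
      hKcont.mul (Real.continuous_exp.comp (continuous_const.mul hKcont))
    simpa [integrableOn_univ] using
      this.continuousOn.integrableOn_compact (isCompact_univ (X := Θ))
  rw [NormedAddCommGroup.tendsto_nhds_zero]
  intro ε hε
  -- the set where K < ε/4
  set S : Set Θ := {θ | K θ < ε / 4} with hSdef
  have hSopen : IsOpen S := isOpen_lt hKcont continuous_const
  have hSne : S.Nonempty := by
    have : (⨅ θ, K θ) < ε / 4 := by rw [hKinf]; linarith
    obtain ⟨θ0, hθ0⟩ := exists_lt_of_ciInf_lt this
    exact ⟨θ0, hθ0⟩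
  set c : ℝ := (ρ S).toReal with hcdef
  have hc : 0 < c := by
    have := hfull S hSopen hSne
    exact ENNReal.toReal_pos this.ne' (measure_ne_top ρ S)
  -- eventual smallness of the exponential tail
  have htail : Tendsto (fun t : ℝ => M * Real.exp (-t * (ε / 4))) atTop (nhds 0) := by
    have h1 : Tendsto (fun t : ℝ => -t * (ε / 4)) atTop atBot := by
      apply Tendsto.atBot_mul_const (by linarith : (0:ℝ) < ε / 4)
      exact tendsto_neg_atTop_atBot.comp tendsto_id
    simpa using (Real.tendsto_exp_atBot.comp h1).const_mul M
  have hev : ∀ᶠ t : ℝ in atTop,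
      M * Real.exp (-t * (ε / 4)) < ε / 2 * c := by
    have hpos : 0 < ε / 2 * c := by positivity
    exact htail.eventually (eventually_lt_nhds hpos)
  filter_upwards [hev, eventually_ge_atTop (0 : ℝ)] with t htail ht0
  -- lower bound for the denominator
  set Z : ℝ := ∫ θ, Real.exp (-t * K θ) ∂ρ with hZdef
  have hZlb : Real.exp (-t * (ε / 4)) * c ≤ Z := by
    have h1 : Real.exp (-t * (ε / 4)) * c ≤ ∫ θ in S, Real.exp (-t * K θ) ∂ρ := by
      apply setIntegral_ge_of_const_le_real hSopen.measurableSet (measure_ne_top ρ S)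
      · intro θ hθ
        apply Real.exp_le_exp.2
        have : K θ ≤ ε / 4 := le_of_lt hθ
        nlinarith
      · exact (hint t).integrableOn
    have h2 : ∫ θ in S, Real.exp (-t * K θ) ∂ρ ≤ Z :=
      setIntegral_le_integral (hint t)
        (Filter.Eventually.of_forall fun θ => (Real.exp_pos _).le)
    linarith
  have hZpos : 0 < Z := lt_of_lt_of_le (by positivity) hZlb
  -- upper bound for the numerator
  set N : ℝ := ∫ θ, K θ * Real.exp (-t * K θ) ∂ρ with hNdef
  have hNub : N ≤ ε / 2 * Z + M * Real.exp (-t * (ε / 2)) := by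
    have hpt : ∀ θ, K θ * Real.exp (-t * K θ) ≤
        ε / 2 * Real.exp (-t * K θ) + M * Real.exp (-t * (ε / 2)) := by
      intro θ
      rcases le_or_gt (K θ) (ε / 2) with h | h
      · have h1 : K θ * Real.exp (-t * K θ) ≤ ε / 2 * Real.exp (-t * K θ) :=
          mul_le_mul_of_nonneg_right h (Real.exp_pos _).le
        nlinarith [Real.exp_pos (-t * (ε / 2)), mul_nonneg hM0 (Real.exp_pos (-t * (ε / 2))).le]
      · have h1 : Real.exp (-t * K θ) ≤ Real.exp (-t * (ε / 2)) := by
          apply Real.exp_le_exp.2; nlinarith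
        have h2 : K θ * Real.exp (-t * K θ) ≤ M * Real.exp (-t * (ε / 2)) :=
          mul_le_mul (hMb θ) h1 (Real.exp_pos _).le hM0
        nlinarith [Real.exp_pos (-t * K θ), hε]
    have hint2 : Integrable (fun θ => ε / 2 * Real.exp (-t * K θ)
        + M * Real.exp (-t * (ε / 2))) ρ :=
      ((hint t).const_mul _).add (integrable_const _)
    calc N ≤ ∫ θ, (ε / 2 * Real.exp (-t * K θ) + M * Real.exp (-t * (ε / 2))) ∂ρ :=
          integral_mono (hintK t) hint2 hpt
      _ = ε / 2 * Z + M * Real.exp (-t * (ε / 2)) := by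
          rw [integral_add ((hint t).const_mul _) (integrable_const _),
            integral_const_mul, integral_const]
          simp [hZdef]
  have hN0 : 0 ≤ N := by
    apply integral_nonneg
    intro θ
    exact mul_nonneg (hK0 θ) (Real.exp_pos _).le
  -- conclude
  have hratio : N / Z < ε := by
    rw [div_lt_iff₀ hZpos]
    have key : M * Real.exp (-t * (ε / 2)) < ε / 2 * Z := by
      have h1 : M * Real.exp (-t * (ε / 2))
          = (M * Real.exp (-t * (ε / 4))) * Real.exp (-t * (ε / 4)) := by
        rw [mul_assoc, ← Real.exp_add]; ring_nf
      have h2 : (M * Real.exp (-t * (ε / 4))) * Real.exp (-t * (ε / 4))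
          < (ε / 2 * c) * Real.exp (-t * (ε / 4)) :=
        mul_lt_mul_of_pos_right htail (Real.exp_pos _)
      have h3 : (ε / 2 * c) * Real.exp (-t * (ε / 4)) ≤ ε / 2 * Z := by
        have := mul_le_mul_of_nonneg_left hZlb (by linarith : (0:ℝ) ≤ ε / 2)
        nlinarith
      linarith
    linarith
  show ‖N / Z‖ < ε
  rw [Real.norm_of_nonneg (div_nonneg hN0 hZpos.le)]
  exact hratio
end

section
/- Let Θ and X be compact metric spaces with Θ nonempty, and let F : Θ × X → ℝ be continuous with F(θ, x) ≥ 0 for all (θ, x) and such that for every x ∈ X there exists θ ∈ Θ with F(θ, x) = 0. Let ρ be a Borel probability measure on Θ with full support (ρ(U) > 0 for every nonempty open U ⊆ Θ). Then for every m > 0 there exists r > 0 such that ρ({ θ ∈ Θ : F(θ, x) ≤ m }) ≥ r for all x ∈ X. -/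
open MeasureTheory
open scoped ENNReal

/-- Final step of Thm. 4.B: a uniform positive lower bound on the prior mass of
the near-optimal sublevel sets of a jointly continuous nonnegative discrepancy
that vanishes at a minimizer for every `x`. -/
theorem uniform_prior_mass_of_sublevel_sets {Θ X : Type*}
    [MetricSpace Θ] [CompactSpace Θ] [Nonempty Θ]
    [MetricSpace X] [CompactSpace X]
    [MeasurableSpace Θ] [BorelSpace Θ]
    (F : Θ × X → ℝ) (hF : Continuous F) (hF0 : ∀ p, 0 ≤ F p)
    (hmin : ∀ x, ∃ θ, F (θ, x) = 0)
    (ρ : Measure Θ) [IsProbabilityMeasure ρ]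
    (hfull : ∀ U : Set Θ, IsOpen U → U.Nonempty → 0 < ρ U) :
    ∀ m : ℝ, 0 < m → ∃ r : ℝ≥0∞, 0 < r ∧
      ∀ x : X, r ≤ ρ {θ : Θ | F (θ, x) ≤ m} := by
  intro m hm
  by_cases hX : Nonempty X
  · -- uniform continuity
    have huc : UniformContinuous F := CompactSpace.uniformContinuous_of_continuous hF
    rw [Metric.uniformContinuous_iff] at huc
    obtain ⟨δ, hδ, hδF⟩ := huc (m / 2) (by linarith)
    -- finite subcover of X by balls of radius δ
    have hcov : (Set.univ : Set X) ⊆ ⋃ x : X, Metric.ball x δ := by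
      intro x _
      exact Set.mem_iUnion.mpr ⟨x, Metric.mem_ball_self hδ⟩
    obtain ⟨t, ht⟩ := isCompact_univ.elim_finite_subcover
      (fun x : X => Metric.ball x δ) (fun x => Metric.isOpen_ball) hcov
    have htne : t.Nonempty := by
      obtain ⟨x⟩ := hX
      obtain ⟨i, hi, _⟩ := Set.mem_iUnion₂.mp (ht (Set.mem_univ x))
      exact ⟨i, hi⟩
    refine ⟨t.inf' htne (fun i => ρ {θ : Θ | F (θ, i) ≤ m / 2}), ?_, ?_⟩
    · rw [Finset.lt_inf'_iff]
      intro i _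
      have hopen : IsOpen {θ : Θ | F (θ, i) < m / 2} :=
        isOpen_lt (hF.comp (Continuous.prodMk_left i)) continuous_const
      have hne : {θ : Θ | F (θ, i) < m / 2}.Nonempty := by
        obtain ⟨θ, hθ⟩ := hmin i
        exact ⟨θ, by simp [hθ]; linarith⟩
      calc (0 : ℝ≥0∞) < ρ {θ : Θ | F (θ, i) < m / 2} := hfull _ hopen hne
        _ ≤ ρ {θ : Θ | F (θ, i) ≤ m / 2} := measure_mono (fun θ (hθ : F (θ, i) < m / 2) => le_of_lt hθ)
    · intro x
      obtain ⟨i, hi, hxi⟩ := Set.mem_iUnion₂.mp (ht (Set.mem_univ x))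
      refine le_trans (Finset.inf'_le _ hi) (measure_mono ?_)
      intro θ hθ
      have hd : dist ((θ, i) : Θ × X) (θ, x) < δ := by
        rw [Prod.dist_eq]
        exact max_lt (by simpa using hδ) (Metric.mem_ball'.mp hxi)
      have := hδF hd
      rw [Real.dist_eq] at this
      have h1 : F (θ, x) ≤ F (θ, i) + m / 2 := by
        cases abs_sub_lt_iff.mp this with
        | intro h1 h2 => linarith
      simp only [Set.mem_setOf_eq] at hθ ⊢
      linarith
  · exact ⟨1, one_pos, fun x => absurd ⟨x⟩ hX⟩
end
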